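/- For a tree T with maximum degree Δ(T) ≥ 1, the strong chromatic index of T equals θ(T) - 1, where θ(T) is the maximum Ore-degree. -/

import Mathlib

open SimpleGraph
open scoped Classical

/-- Two edges (as unordered pairs of vertices) are adjacent:
they are distinct and share an endpoint. -/
def EdgeAdj {V : Type*} (e₁ e₂ : Sym2 V) : Prop :=
  e₁ ≠ e₂ ∧ ∃ v, v ∈ e₁ ∧ v ∈ e₂

/-- `φ` is a star edge coloring of `G`: a proper edge coloring such that
no path of length four and no cycle of length four is bichromatic. -/
def IsStarEdgeColoring {V : Type*} (G : SimpleGraph V) (φ : Sym2 V → ℕ) : Prop :=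
  (∀ e₁ ∈ G.edgeSet, ∀ e₂ ∈ G.edgeSet, EdgeAdj e₁ e₂ → φ e₁ ≠ φ e₂) ∧
  (∀ (u v : V) (p : G.Walk u v), p.IsPath → p.length = 4 →
      ¬ ∃ c₁ c₂ : ℕ, ∀ e ∈ p.edges, φ e = c₁ ∨ φ e = c₂) ∧
  (∀ (u : V) (p : G.Walk u u), p.IsCycle → p.length = 4 →
      ¬ ∃ c₁ c₂ : ℕ, ∀ e ∈ p.edges, φ e = c₁ ∨ φ e = c₂)

/-- `G` has a star edge coloring using colors `< k`. -/
def StarColorable {V : Type*} (G : SimpleGraph V) (k : ℕ) : Prop :=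
  ∃ φ : Sym2 V → ℕ, (∀ e ∈ G.edgeSet, φ e < k) ∧ IsStarEdgeColoring G φ

/-- The star chromatic index of `G`. -/
noncomputable def starChromaticIndex {V : Type*} (G : SimpleGraph V) : ℕ :=
  sInf {k | StarColorable G k}

/-- `G` is star `k`-edge choosable. -/
def StarChoosable {V : Type*} (G : SimpleGraph V) (k : ℕ) : Prop :=
  ∀ L : Sym2 V → Finset ℕ, (∀ e ∈ G.edgeSet, k ≤ (L e).card) →
    ∃ φ : Sym2 V → ℕ, (∀ e ∈ G.edgeSet, φ e ∈ L e) ∧ IsStarEdgeColoring G φ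

/-- The list star chromatic index of `G`. -/
noncomputable def listStarChromaticIndex {V : Type*} (G : SimpleGraph V) : ℕ :=
  sInf {k | StarChoosable G k}

/-- The maximum Ore-degree `θ(G) = max_{xy ∈ E(G)} (d(x) + d(y))`. -/
noncomputable def oreDegree {V : Type*} (G : SimpleGraph V) [Fintype V] : ℕ :=
  sSup {n | ∃ x y, G.Adj x y ∧ n = G.degree x + G.degree y}

/-- `H = T ∪ C` is a generalized Halin graph with characteristic tree `T` and
adjoint cycle `C`: `T` is a tree with `Δ(T) ≥ 3`, `C` is a cycle (a connected
`2`-regular subgraph on its support) passing exactly through the leaves of `T`,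
the edges of `T` and `C` are disjoint, and `H` is their union. -/
def IsGenHalin {V : Type*} [Fintype V] (H T C : SimpleGraph V) : Prop :=
  T.IsTree ∧ 3 ≤ T.maxDegree ∧ H = T ⊔ C ∧ Disjoint T.edgeSet C.edgeSet ∧
  (∀ v, T.degree v = 1 ↔ C.degree v = 2) ∧
  (∀ v, C.degree v = 0 ∨ C.degree v = 2) ∧
  (∀ u v, C.degree u = 2 → C.degree v = 2 → C.Reachable u v)

/-- A Halin graph: a generalized Halin graph whose characteristic tree has
no vertex of degree `2`. -/
def IsHalin {V : Type*} [Fintype V] (H T C : SimpleGraph V) : Prop :=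
  IsGenHalin H T C ∧ ∀ v, T.degree v ≠ 2

/-- A complete Halin graph: all leaves of `T` are at the same distance
from the root. -/
def IsCompleteHalin {V : Type*} [Fintype V] (H T C : SimpleGraph V) : Prop :=
  IsHalin H T C ∧
    ∃ r, ∀ u v, T.degree u = 1 → T.degree v = 1 → T.dist r u = T.dist r v

/-- `φ` is a strong edge coloring of `G`: edges at distance at most two
(adjacent edges, or edges joined by an edge) get distinct colors. -/
def IsStrongEdgeColoring {V : Type*} (G : SimpleGraph V) (φ : Sym2 V → ℕ) : Prop :=
  ∀ e₁ ∈ G.edgeSet, ∀ e₂ ∈ G.edgeSet, e₁ ≠ e₂ →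
    ((∃ v, v ∈ e₁ ∧ v ∈ e₂) ∨ (∃ u v, u ∈ e₁ ∧ v ∈ e₂ ∧ G.Adj u v)) →
    φ e₁ ≠ φ e₂

/-- The strong chromatic index of `G`. -/
noncomputable def strongChromaticIndex {V : Type*} (G : SimpleGraph V) : ℕ :=
  sInf {k | ∃ φ : Sym2 V → ℕ, (∀ e ∈ G.edgeSet, φ e < k) ∧ IsStrongEdgeColoring G φ}

section StrongTreeAux

variable {V : Type*}

/-- The parent of `v` in a tree rooted at `r`. -/
noncomputable def stPar (T : SimpleGraph V) (r v : V) : V :=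
  if h : ∃ u, T.Adj u v ∧ T.dist r u + 1 = T.dist r v then h.choose else v

lemma stPar_root (T : SimpleGraph V) (r : V) : stPar T r r = r := by
  rw [stPar, dif_neg]
  rintro ⟨u, -, hu⟩
  rw [SimpleGraph.dist_self] at hu
  omega

lemma stDist_step {T : SimpleGraph V} (hc : T.Connected) (r : V) {a b : V} (h : T.Adj a b) :
    T.dist r b ≤ T.dist r a + 1 := by
  refine le_trans (hc.dist_triangle (v := a)) ?_
  have : T.dist a b ≤ 1 := by
    simpa using SimpleGraph.dist_le (SimpleGraph.Walk.cons h SimpleGraph.Walk.nil)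
  omega

lemma stPar_spec {T : SimpleGraph V} (hc : T.Connected) (r : V) {v : V} (hv : v ≠ r) :
    T.Adj (stPar T r v) v ∧ T.dist r (stPar T r v) + 1 = T.dist r v := by
  have hdist : T.dist r v ≠ 0 := by
    intro h0
    exact hv (((hc.dist_eq_zero_iff).mp h0)).symm
  obtain ⟨p, hp⟩ := hc.exists_walk_length_eq_dist r v
  obtain ⟨u, ha, q, hq⟩ := SimpleGraph.Walk.exists_eq_cons_of_ne hv p.reverse
  · have hlen : q.length + 1 = T.dist r v := by
      have := congrArg SimpleGraph.Walk.length hq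
      simp only [SimpleGraph.Walk.length_reverse, SimpleGraph.Walk.length_cons, hp] at this
      omega
    have hle : T.dist r u ≤ q.length := by
      simpa using SimpleGraph.dist_le q.reverse
    have hge : T.dist r v ≤ T.dist r u + 1 := stDist_step hc r ha.symm
    have hex : ∃ u, T.Adj u v ∧ T.dist r u + 1 = T.dist r v :=
      ⟨u, ha.symm, by omega⟩
    rw [stPar, dif_pos hex]
    exact ⟨hex.choose_spec.1, hex.choose_spec.2⟩

lemma stDist_root {T : SimpleGraph V} (hc : T.Connected) {r v : V} (h : T.dist r v = 0) :
    v = r := ((hc.dist_eq_zero_iff).mp h).symm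

/-- Adjacent vertices have distinct depths (trees are bipartite). -/
lemma stDist_ne_of_adj {T : SimpleGraph V} (hT : T.IsTree) (r : V) {u v : V} (h : T.Adj u v) :
    T.dist r u ≠ T.dist r v := by
  have hc := hT.isConnected
  intro heq
  obtain ⟨P, hP, hPl⟩ := hc.exists_path_of_dist r u
  have hvP : v ∉ P.support := by
    intro hvP
    have h1 := SimpleGraph.Walk.length_takeUntil_le P hvP
    have h2 : T.dist r v ≤ (P.takeUntil v hvP).length := SimpleGraph.dist_le _
    have h3 : (P.takeUntil v hvP).length + (P.dropUntil v hvP).length = P.length := by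
      conv_rhs => rw [← P.take_spec hvP]
      rw [SimpleGraph.Walk.length_append]
    have h4 : (P.dropUntil v hvP).length = 0 := by omega
    exact h.ne' (SimpleGraph.Walk.eq_of_length_eq_zero h4)
  have hQpath : (P.concat h).IsPath := by
    have : (P.concat h).reverse.IsPath := by
      rw [SimpleGraph.Walk.reverse_concat]
      refine SimpleGraph.Walk.IsPath.cons hP.reverse ?_
      rwa [SimpleGraph.Walk.support_reverse, List.mem_reverse]
    have h' := this.reverse; rwa [SimpleGraph.Walk.reverse_reverse] at h'
  obtain ⟨Q, hQ, hQl⟩ := hc.exists_path_of_dist r v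
  have := (hT.existsUnique_path r v).unique hQpath hQ
  have hlen := congrArg SimpleGraph.Walk.length this
  rw [SimpleGraph.Walk.length_concat, hPl, hQl, heq] at hlen
  omega

/-- Parent uniqueness: any neighbour at smaller depth is the parent. -/
lemma stPar_unique {T : SimpleGraph V} (hT : T.IsTree) (r : V) {u v : V} (h : T.Adj u v)
    (hd : T.dist r u + 1 = T.dist r v) : u = stPar T r v := by
  have hc := hT.isConnected
  have hv : v ≠ r := by
    intro hvr; subst hvr
    rw [SimpleGraph.dist_self] at hd
    omega
  obtain ⟨hadj, hdd⟩ := stPar_spec hc r hv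
  set u' := stPar T r v with hu'
  -- build two paths from r to v and use uniqueness
  have build : ∀ (w : V) (hw : T.Adj w v), T.dist r w + 1 = T.dist r v →
      ∃ P : T.Walk r w, (P.concat hw).IsPath ∧ P.length = T.dist r w := by
    intro w hw hdw
    obtain ⟨P, hP, hPl⟩ := hc.exists_path_of_dist r w
    have hvP : v ∉ P.support := by
      intro hvP
      have h1 := SimpleGraph.Walk.length_takeUntil_le P hvP
      have h2 : T.dist r v ≤ (P.takeUntil v hvP).length := SimpleGraph.dist_le _
      omega
    have hQpath : (P.concat hw).IsPath := by
      have : (P.concat hw).reverse.IsPath := by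
        rw [SimpleGraph.Walk.reverse_concat]
        refine SimpleGraph.Walk.IsPath.cons hP.reverse ?_
        rwa [SimpleGraph.Walk.support_reverse, List.mem_reverse]
      have h' := this.reverse; rwa [SimpleGraph.Walk.reverse_reverse] at h'
    exact ⟨P, hQpath, hPl⟩
  obtain ⟨P, hPpath, hPl⟩ := build u h hd
  obtain ⟨P', hP'path, hP'l⟩ := build u' hadj hdd
  have hequ := (hT.existsUnique_path r v).unique hPpath hP'path
  obtain ⟨hv', -⟩ := SimpleGraph.Walk.concat_inj hequ
  exact hv'

/-- Every edge of the tree joins a vertex to its parent. -/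
lemma stPar_of_adj {T : SimpleGraph V} (hT : T.IsTree) (r : V) {u v : V} (h : T.Adj u v) :
    u = stPar T r v ∨ v = stPar T r u := by
  have hc := hT.isConnected
  have h1 := stDist_ne_of_adj hT r h
  have h2 := stDist_step hc r h
  have h3 := stDist_step hc r h.symm
  rcases lt_or_gt_of_ne h1 with hlt | hgt
  · exact Or.inl (stPar_unique hT r h (by omega))
  · exact Or.inr (stPar_unique hT r h.symm (by omega))

end StrongTreeAux

section GreedyAux

variable {V : Type*} [Fintype V]

/-- Greedy coloring auxiliary: colors of vertices of rank `< n` are fixed at step `n`. -/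
noncomputable def stAux (K : V → Finset V) (rk : V → ℕ) : ℕ → V → ℕ
  | 0, _ => 0
  | (n+1), v =>
      if rk v = n then sInf {c | c ∉ (K v).image (stAux K rk n)} else stAux K rk n v

/-- The greedy color of a vertex. -/
noncomputable def stCol (K : V → Finset V) (rk : V → ℕ) (v : V) : ℕ :=
  stAux K rk (rk v + 1) v

lemma stAux_stab (K : V → Finset V) (rk : V → ℕ) (v : V) :
    ∀ m, rk v < m → stAux K rk m v = stCol K rk v := by
  intro m
  induction m with
  | zero => omega
  | succ n ih =>
    intro hlt
    by_cases h : rk v = n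
    · subst h; rfl
    · have : rk v < n := by omega
      rw [show stAux K rk (n+1) v = stAux K rk n v from by rw [stAux, if_neg h]]
      exact ih this

lemma stCol_eq (K : V → Finset V) (rk : V → ℕ) (v : V) :
    stCol K rk v = sInf {c | c ∉ (K v).image (stAux K rk (rk v))} := by
  rw [stCol, stAux, if_pos rfl]

lemma stCol_mem (K : V → Finset V) (rk : V → ℕ) (v : V) :
    stCol K rk v ∉ (K v).image (stAux K rk (rk v)) := by
  rw [stCol_eq]
  have hne : {c | c ∉ (K v).image (stAux K rk (rk v))}.Nonempty := by
    obtain ⟨c, hc⟩ := Infinite.exists_notMem_finset ((K v).image (stAux K rk (rk v)))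
    exact ⟨c, hc⟩
  exact Nat.sInf_mem hne

lemma stCol_avoid (K : V → Finset V) (rk : V → ℕ) {v w : V} (hw : w ∈ K v)
    (hr : rk w < rk v) : stCol K rk v ≠ stCol K rk w := by
  intro h
  apply stCol_mem K rk v
  rw [h]
  exact Finset.mem_image.mpr ⟨w, hw, stAux_stab K rk w (rk v) hr⟩

lemma stCol_le_card (K : V → Finset V) (rk : V → ℕ) (v : V) :
    stCol K rk v ≤ (K v).card := by
  rw [stCol_eq]
  set s := (K v).image (stAux K rk (rk v)) with hs
  have hcard : s.card ≤ (K v).card := Finset.card_image_le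
  obtain ⟨c, hc1, hc2⟩ : ∃ c, c ≤ s.card ∧ c ∉ s := by
    by_contra hcon
    push_neg at hcon
    have hsub : Finset.range (s.card + 1) ⊆ s := by
      intro c hc
      exact hcon c (by simpa using Nat.lt_succ_iff.mp (Finset.mem_range.mp hc))
    have := Finset.card_le_card hsub
    simp [Finset.card_range] at this
  exact le_trans (Nat.sInf_le hc2) (le_trans hc1 hcard)

end GreedyAux

section P3
variable {V : Type*}

lemma stConfl_cases {T : SimpleGraph V} (hT : T.IsTree) (r : V) {v w : V}
    (hv : v ≠ r) (hw : w ≠ r) (hvw : w ≠ v) (hd : T.dist r w ≤ T.dist r v)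
    (hc : (∃ x, x ∈ s(stPar T r v, v) ∧ x ∈ s(stPar T r w, w)) ∨
          (∃ a b, a ∈ s(stPar T r v, v) ∧ b ∈ s(stPar T r w, w) ∧ T.Adj a b)) :
    (w = stPar T r v ∨ stPar T r w = stPar T r v) ∨
      (stPar T r v ≠ r ∧
        (w = stPar T r (stPar T r v) ∨ stPar T r w = stPar T r (stPar T r v))) := by
  have hconn := hT.isConnected
  obtain ⟨hadjv, hdv⟩ := stPar_spec hconn r hv
  obtain ⟨hadjw, hdw⟩ := stPar_spec hconn r hw
  set pv := stPar T r v
  set pw := stPar T r w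
  have hpvr_of : 1 ≤ T.dist r pv → pv ≠ r := by
    intro h1 hr
    rw [hr, SimpleGraph.dist_self] at h1; omega
  rcases hc with ⟨x, hx1, hx2⟩ | ⟨a, b, ha, hb, hab⟩
  · rw [Sym2.mem_iff] at hx1 hx2
    rcases hx1 with rfl | rfl <;> rcases hx2 with h2 | h2
    · exact Or.inl (Or.inr h2.symm)
    · exact Or.inl (Or.inl h2.symm)
    · -- v = pw : depth contradiction
      exfalso; rw [← h2] at hdw; omega
    · exact absurd h2.symm hvw
  · rw [Sym2.mem_iff] at ha hb
    rcases ha with ha | ha <;> rcases hb with hb | hb <;> rw [ha, hb] at hab <;> clear ha hb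
    · -- Adj pv pw
      have hne := stDist_ne_of_adj hT r hab
      have h1 := stDist_step hconn r hab
      have h2 := stDist_step hconn r hab.symm
      have : T.dist r pw + 1 = T.dist r pv := by omega
      refine Or.inr ⟨hpvr_of (by omega), Or.inr (stPar_unique hT r hab.symm this)⟩
    · -- Adj pv w
      have hne := stDist_ne_of_adj hT r hab
      have h1 := stDist_step hconn r hab
      have h2 := stDist_step hconn r hab.symm
      rcases lt_or_gt_of_ne hne with hlt | hgt
      · -- dist r pv < dist r w, so dist r w = dist r pv + 1 = dist r v : pv = par w
        exact Or.inl (Or.inr (stPar_unique hT r hab (by omega)).symm)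
      · -- dist r w + 1 = dist r pv : w = par pv
        exact Or.inr ⟨hpvr_of (by omega), Or.inl (stPar_unique hT r hab.symm (by omega))⟩
    · -- Adj v pw
      have hne := stDist_ne_of_adj hT r hab
      have h1 := stDist_step hconn r hab
      have h2 := stDist_step hconn r hab.symm
      have : T.dist r pw + 1 = T.dist r v := by omega
      exact Or.inl (Or.inr (stPar_unique hT r hab.symm this))
    · -- Adj v w
      have hne := stDist_ne_of_adj hT r hab
      have h1 := stDist_step hconn r hab
      have h2 := stDist_step hconn r hab.symm
      exact Or.inl (Or.inl (stPar_unique hT r hab.symm (by omega)))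

end P3

section Main
variable {V : Type*} [Fintype V]

/-- conflict predicate between the parent edges of `v` and `w`. -/
def stCf (T : SimpleGraph V) (r v w : V) : Prop :=
  (∃ x, x ∈ s(stPar T r v, v) ∧ x ∈ s(stPar T r w, w)) ∨
    (∃ a b, a ∈ s(stPar T r v, v) ∧ b ∈ s(stPar T r w, w) ∧ T.Adj a b)

/-- the rank used for the greedy order: depth first, then an arbitrary index. -/
noncomputable def stRk (T : SimpleGraph V) (r : V) (v : V) : ℕ :=
  T.dist r v * Fintype.card V + (Fintype.equivFin V v).val

lemma stRk_lt {T : SimpleGraph V} {r : V} {v w : V} (h : T.dist r v < T.dist r w) :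
    stRk T r v < stRk T r w := by
  have h1 : (Fintype.equivFin V v).val < Fintype.card V := (Fintype.equivFin V v).isLt
  calc stRk T r v < (T.dist r v + 1) * Fintype.card V := by
        rw [Nat.succ_mul]; exact Nat.add_lt_add_left h1 _
    _ ≤ T.dist r w * Fintype.card V := Nat.mul_le_mul_right _ (by omega)
    _ ≤ stRk T r w := Nat.le_add_right _ _

lemma stRk_mono {T : SimpleGraph V} {r : V} {v w : V} (h : stRk T r w < stRk T r v) :
    T.dist r w ≤ T.dist r v := by
  by_contra hcon
  have := stRk_lt (T := T) (r := r) (v := v) (w := w) (by omega)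
  omega

lemma stRk_inj {T : SimpleGraph V} {r : V} {v w : V} (h : stRk T r v = stRk T r w) :
    v = w := by
  have hd : T.dist r v = T.dist r w := by
    rcases lt_trichotomy (T.dist r v) (T.dist r w) with hh | hh | hh
    · exact absurd (stRk_lt hh) (by omega)
    · exact hh
    · exact absurd (stRk_lt hh) (by omega)
  have : ((Fintype.equivFin V) v).val = ((Fintype.equivFin V) w).val := by
    have := h; rw [stRk, stRk, hd] at this; omega
  exact (Fintype.equivFin V).injective (Fin.ext this)

/-- the finset of already-colored conflicting vertices. -/
noncomputable def stK (T : SimpleGraph V) (r : V) (v : V) : Finset V :=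
  Finset.univ.filter (fun w => w ≠ v ∧ w ≠ r ∧ stRk T r w < stRk T r v ∧ stCf T r v w)

/-- the strong edge coloring of a tree. -/
noncomputable def stφ (T : SimpleGraph V) (r : V) : Sym2 V → ℕ :=
  Sym2.lift ⟨fun a b =>
    if T.dist r a < T.dist r b then stCol (stK T r) (stRk T r) b
    else if T.dist r b < T.dist r a then stCol (stK T r) (stRk T r) a
    else max (stCol (stK T r) (stRk T r) a) (stCol (stK T r) (stRk T r) b), by
      intro a b
      dsimp only
      split_ifs <;> first | rfl | omega | exact max_comm _ _⟩

lemma stφ_ev {T : SimpleGraph V} (hc : T.Connected) (r : V) {v : V} (hv : v ≠ r) :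
    stφ T r s(stPar T r v, v) = stCol (stK T r) (stRk T r) v := by
  obtain ⟨-, hd⟩ := stPar_spec hc r hv
  rw [stφ, Sym2.lift_mk]
  exact if_pos (by omega)

lemma stRep {T : SimpleGraph V} (hT : T.IsTree) (r : V) :
    ∀ e ∈ T.edgeSet, ∃ v, v ≠ r ∧ e = s(stPar T r v, v) := by
  intro e he
  induction e with
  | _ a b =>
    rw [mem_edgeSet] at he
    rcases stPar_of_adj hT r he with h | h
    · have hbr : b ≠ r := by
        intro hbr; subst hbr
        rw [stPar_root] at h; subst h
        exact he.ne rfl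
      exact ⟨b, hbr, by rw [← h]⟩
    · have har : a ≠ r := by
        intro har; subst har
        rw [stPar_root] at h; subst h
        exact he.ne rfl
      exact ⟨a, har, by rw [← h, Sym2.eq_swap]⟩

end Main
section Counting
variable {V : Type*} [Fintype V]

lemma stK_card {T : SimpleGraph V} (hT : T.IsTree) (r : V) {v : V} (hv : v ≠ r)
    (hθ : ∀ {x y : V}, T.Adj x y →
      T.degree x + T.degree y ≤ oreDegree T) :
    (stK T r v).card ≤ oreDegree T - 2 := by
  have hconn := hT.isConnected
  obtain ⟨hadj, hd⟩ := stPar_spec hconn r hv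
  set pv := stPar T r v with hpv
  have hdegv : 0 < T.degree v := by
    rw [SimpleGraph.degree_pos_iff_exists_adj]; exact ⟨pv, hadj.symm⟩
  have hvNpv : v ∈ T.neighborFinset pv := (T.mem_neighborFinset pv v).mpr hadj
  have hKmem : ∀ w ∈ stK T r v,
      ((w = pv ∨ stPar T r w = pv) ∨
        (pv ≠ r ∧ (w = stPar T r pv ∨ stPar T r w = stPar T r pv))) ∧ w ≠ v ∧ w ≠ r := by
    intro w hw
    rw [stK, Finset.mem_filter] at hw
    obtain ⟨-, hwv, hwr, hrk, hcf⟩ := hw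
    exact ⟨stConfl_cases hT r hv hwr hwv (stRk_mono hrk) hcf, hwv, hwr⟩
  by_cases hpvr : pv = r
  · -- the parent of v is the root
    have hsub : stK T r v ⊆ (T.neighborFinset r).erase v := by
      intro w hw
      obtain ⟨hcase, hwv, hwr⟩ := hKmem w hw
      rcases hcase with (h | h) | ⟨hne, -⟩
      · exact absurd (h.trans hpvr) hwr
      · obtain ⟨hadjw, -⟩ := stPar_spec hconn r hwr
        rw [h, hpvr] at hadjw
        exact Finset.mem_erase.mpr ⟨hwv, (T.mem_neighborFinset r w).mpr hadjw⟩
      · exact absurd hpvr hne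
    have h1 := Finset.card_le_card hsub
    have h2 : v ∈ T.neighborFinset r := by rwa [hpvr] at hvNpv
    have h3 := Finset.card_erase_of_mem h2
    have h4 : (T.neighborFinset r).card = T.degree r := rfl
    have h5 : T.degree pv + T.degree v ≤ oreDegree T := hθ hadj
    rw [hpvr] at h5
    omega
  · -- v has a grandparent q
    obtain ⟨hadjq, hdq⟩ := stPar_spec hconn r hpvr
    set q := stPar T r pv with hq
    have hθ2 : T.degree q + T.degree pv ≤ oreDegree T := hθ hadjq
    have hqv : q ≠ v := by intro h; rw [h] at hdq; omega
    have hqNpv : q ∈ (T.neighborFinset pv).erase v :=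
      Finset.mem_erase.mpr ⟨hqv, (T.mem_neighborFinset pv q).mpr hadjq.symm⟩
    have hpvNq : pv ∈ T.neighborFinset q := (T.mem_neighborFinset q pv).mpr hadjq
    -- siblings of v land in (N pv) minus v and q
    have hsib : ∀ w, w ≠ r → w ≠ v → stPar T r w = pv →
        w ∈ ((T.neighborFinset pv).erase v).erase q := by
      intro w hwr hwv hpw
      obtain ⟨hadjw, hdw⟩ := stPar_spec hconn r hwr
      rw [hpw] at hadjw hdw
      refine Finset.mem_erase.mpr ⟨?_, Finset.mem_erase.mpr
        ⟨hwv, (T.mem_neighborFinset pv w).mpr hadjw⟩⟩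
      intro hwq
      rw [hwq] at hdw
      omega
    have hcard1 : ((T.neighborFinset pv).erase v).card = T.degree pv - 1 :=
      Finset.card_erase_of_mem hvNpv
    have hcard2 : (((T.neighborFinset pv).erase v).erase q).card
        = ((T.neighborFinset pv).erase v).card - 1 := Finset.card_erase_of_mem hqNpv
    have hpos1 : 0 < ((T.neighborFinset pv).erase v).card := Finset.card_pos.mpr ⟨q, hqNpv⟩
    have hpos2 : 0 < (T.neighborFinset pv).card := Finset.card_pos.mpr ⟨v, hvNpv⟩
    have hdegpv : (T.neighborFinset pv).card = T.degree pv := rfl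
    have hdegq : (T.neighborFinset q).card = T.degree q := rfl
    by_cases hqr : q = r
    · -- the grandparent is the root
      have hsub : stK T r v ⊆ insert pv
          ((((T.neighborFinset pv).erase v).erase q) ∪ ((T.neighborFinset q).erase pv)) := by
        intro w hw
        obtain ⟨hcase, hwv, hwr⟩ := hKmem w hw
        by_cases hwpv : w = pv
        · exact Finset.mem_insert.mpr (Or.inl hwpv)
        rcases hcase with (h | h) | ⟨-, h | h⟩
        · exact absurd h hwpv
        · exact Finset.mem_insert.mpr (Or.inr (Finset.mem_union_left _ (hsib w hwr hwv h)))
        · exact absurd (h.trans hqr) hwr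
        · obtain ⟨hadjw, -⟩ := stPar_spec hconn r hwr
          rw [h] at hadjw
          exact Finset.mem_insert.mpr (Or.inr (Finset.mem_union_right _
            (Finset.mem_erase.mpr ⟨hwpv, (T.mem_neighborFinset q w).mpr hadjw⟩)))
      have h1 := Finset.card_le_card hsub
      have h2 := Finset.card_insert_le pv
        ((((T.neighborFinset pv).erase v).erase q) ∪ ((T.neighborFinset q).erase pv))
      have h3 := Finset.card_union_le (((T.neighborFinset pv).erase v).erase q)
        ((T.neighborFinset q).erase pv)
      have h4 : ((T.neighborFinset q).erase pv).card = T.degree q - 1 :=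
        Finset.card_erase_of_mem hpvNq
      have h5 : 0 < (T.neighborFinset q).card := Finset.card_pos.mpr ⟨pv, hpvNq⟩
      omega
    · -- q also has a parent pq
      obtain ⟨hadjpq, hdpq⟩ := stPar_spec hconn r hqr
      set pq := stPar T r q with hpq
      have hpqpv : pq ≠ pv := by intro h; rw [h] at hdpq; omega
      have hpqNq : pq ∈ (T.neighborFinset q).erase pv :=
        Finset.mem_erase.mpr ⟨hpqpv, (T.mem_neighborFinset q pq).mpr hadjpq.symm⟩
      have hsub : stK T r v ⊆ insert pv (insert q
          ((((T.neighborFinset pv).erase v).erase q) ∪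
            (((T.neighborFinset q).erase pv).erase pq))) := by
        intro w hw
        obtain ⟨hcase, hwv, hwr⟩ := hKmem w hw
        by_cases hwpv : w = pv
        · exact Finset.mem_insert.mpr (Or.inl hwpv)
        by_cases hwq : w = q
        · exact Finset.mem_insert.mpr (Or.inr (Finset.mem_insert.mpr (Or.inl hwq)))
        rcases hcase with (h | h) | ⟨-, h | h⟩
        · exact absurd h hwpv
        · exact Finset.mem_insert.mpr (Or.inr (Finset.mem_insert.mpr (Or.inr
            (Finset.mem_union_left _ (hsib w hwr hwv h)))))
        · exact absurd h hwq
        · -- uncles: stPar w = q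
          obtain ⟨hadjw, hdw⟩ := stPar_spec hconn r hwr
          rw [h] at hadjw hdw
          have hwpq : w ≠ pq := by intro hh; rw [hh] at hdw; omega
          exact Finset.mem_insert.mpr (Or.inr (Finset.mem_insert.mpr (Or.inr
            (Finset.mem_union_right _ (Finset.mem_erase.mpr ⟨hwpq,
              Finset.mem_erase.mpr ⟨hwpv, (T.mem_neighborFinset q w).mpr hadjw⟩⟩)))))
      have h1 := Finset.card_le_card hsub
      have h2 := Finset.card_insert_le pv (insert q
          ((((T.neighborFinset pv).erase v).erase q) ∪
            (((T.neighborFinset q).erase pv).erase pq)))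
      have h2' := Finset.card_insert_le q
          ((((T.neighborFinset pv).erase v).erase q) ∪
            (((T.neighborFinset q).erase pv).erase pq))
      have h3 := Finset.card_union_le (((T.neighborFinset pv).erase v).erase q)
        (((T.neighborFinset q).erase pv).erase pq)
      have h4 : ((T.neighborFinset q).erase pv).card = T.degree q - 1 :=
        Finset.card_erase_of_mem hpvNq
      have h4' : (((T.neighborFinset q).erase pv).erase pq).card
          = ((T.neighborFinset q).erase pv).card - 1 := Finset.card_erase_of_mem hpqNq
      have h5 : 0 < ((T.neighborFinset q).erase pv).card := Finset.card_pos.mpr ⟨pq, hpqNq⟩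
      have h6 : 0 < (T.neighborFinset q).card := Finset.card_pos.mpr ⟨pv, hpvNq⟩
      omega

end Counting
section Coloring
variable {V : Type*} [Fintype V]

lemma stφ_strong {T : SimpleGraph V} (hT : T.IsTree) (r : V) :
    IsStrongEdgeColoring T (stφ T r) := by
  have hconn := hT.isConnected
  intro e₁ he₁ e₂ he₂ hne hcf
  obtain ⟨v₁, hv₁, rfl⟩ := stRep hT r e₁ he₁
  obtain ⟨v₂, hv₂, rfl⟩ := stRep hT r e₂ he₂
  rw [stφ_ev hconn r hv₁, stφ_ev hconn r hv₂]
  have hvv : v₁ ≠ v₂ := by rintro rfl; exact hne rfl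
  have key : ∀ a b : V, a ≠ r → b ≠ r → b ≠ a → stRk T r b < stRk T r a →
      stCf T r a b → stCol (stK T r) (stRk T r) a ≠ stCol (stK T r) (stRk T r) b := by
    intro a b har hbr hba hrk hcf'
    refine stCol_avoid (stK T r) (stRk T r) ?_ hrk
    rw [stK, Finset.mem_filter]
    exact ⟨Finset.mem_univ b, hba, hbr, hrk, hcf'⟩
  have hCf12 : stCf T r v₁ v₂ := hcf
  have hCf21 : stCf T r v₂ v₁ := by
    rcases hcf with ⟨x, hx1, hx2⟩ | ⟨a, b, ha, hb, hab⟩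
    · exact Or.inl ⟨x, hx2, hx1⟩
    · exact Or.inr ⟨b, a, hb, ha, hab.symm⟩
  rcases lt_trichotomy (stRk T r v₁) (stRk T r v₂) with h | h | h
  · exact (key v₂ v₁ hv₂ hv₁ hvv h hCf21).symm
  · exact absurd (stRk_inj h) hvv
  · exact key v₁ v₂ hv₁ hv₂ hvv.symm h hCf12

lemma stφ_bound {T : SimpleGraph V} (hT : T.IsTree) (r : V)
    (hθ : ∀ {x y : V}, T.Adj x y → T.degree x + T.degree y ≤ oreDegree T)
    (hθ2 : 2 ≤ oreDegree T) :
    ∀ e ∈ T.edgeSet, stφ T r e < oreDegree T - 1 := by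
  intro e he
  obtain ⟨v, hv, rfl⟩ := stRep hT r e he
  rw [stφ_ev hT.isConnected r hv]
  have h1 := stCol_le_card (stK T r) (stRk T r) v
  have h2 := stK_card hT r hv hθ
  omega

lemma stLower {T : SimpleGraph V} {x y : V} (hxy : T.Adj x y) (k : ℕ) (φ : Sym2 V → ℕ)
    (hφ : ∀ e ∈ T.edgeSet, φ e < k) (hst : IsStrongEdgeColoring T φ) :
    T.degree x + T.degree y - 1 ≤ k := by
  classical
  set A := (T.neighborFinset x).image (fun z => s(x, z)) with hA
  set B := (T.neighborFinset y).image (fun z => s(y, z)) with hB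
  have hinjx : Function.Injective (fun z : V => s(x, z)) := fun a b h => Sym2.congr_right.mp h
  have hinjy : Function.Injective (fun z : V => s(y, z)) := fun a b h => Sym2.congr_right.mp h
  have hAcard : A.card = T.degree x := by
    rw [hA, Finset.card_image_of_injective _ hinjx]; rfl
  have hBcard : B.card = T.degree y := by
    rw [hB, Finset.card_image_of_injective _ hinjy]; rfl
  have hedge : ∀ e ∈ A ∪ B, e ∈ T.edgeSet := by
    intro e he
    rcases Finset.mem_union.mp he with h | h
    · obtain ⟨z, hz, rfl⟩ := Finset.mem_image.mp h
      exact (T.mem_edgeSet).mpr ((T.mem_neighborFinset x z).mp hz)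
    · obtain ⟨z, hz, rfl⟩ := Finset.mem_image.mp h
      exact (T.mem_edgeSet).mpr ((T.mem_neighborFinset y z).mp hz)
  have hxmem : ∀ e ∈ A, x ∈ e := by
    intro e he; obtain ⟨z, hz, rfl⟩ := Finset.mem_image.mp he; exact Sym2.mem_mk_left x z
  have hymem : ∀ e ∈ B, y ∈ e := by
    intro e he; obtain ⟨z, hz, rfl⟩ := Finset.mem_image.mp he; exact Sym2.mem_mk_left y z
  have hinj : Set.InjOn φ (A ∪ B : Finset (Sym2 V)) := by
    intro e₁ h1 e₂ h2 heq
    by_contra hne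
    refine hst e₁ (hedge e₁ (by simpa using h1)) e₂ (hedge e₂ (by simpa using h2)) hne ?_ heq
    have h1' : e₁ ∈ A ∪ B := by simpa using h1
    have h2' : e₂ ∈ A ∪ B := by simpa using h2
    rcases Finset.mem_union.mp h1' with ha1 | hb1 <;> rcases Finset.mem_union.mp h2' with ha2 | hb2
    · exact Or.inl ⟨x, hxmem e₁ ha1, hxmem e₂ ha2⟩
    · exact Or.inr ⟨x, y, hxmem e₁ ha1, hymem e₂ hb2, hxy⟩
    · exact Or.inr ⟨y, x, hymem e₁ hb1, hxmem e₂ ha2, hxy.symm⟩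
    · exact Or.inl ⟨y, hymem e₁ hb1, hymem e₂ hb2⟩
  have hABcard : (A ∪ B).card + (A ∩ B).card = A.card + B.card :=
    Finset.card_union_add_card_inter A B
  have hABint : A ∩ B = {s(x, y)} := by
    apply Finset.Subset.antisymm
    · intro e he
      obtain ⟨h1, h2⟩ := Finset.mem_inter.mp he
      obtain ⟨z1, hz1, rfl⟩ := Finset.mem_image.mp h1
      obtain ⟨z2, hz2, heq⟩ := Finset.mem_image.mp h2
      rw [Sym2.eq_iff] at heq
      rcases heq with ⟨hy, -⟩ | ⟨hx, hz⟩
      · exact absurd hy.symm hxy.ne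
      · exact Finset.mem_singleton.mpr (by rw [hx])
    · intro e he
      rw [Finset.mem_singleton] at he
      subst he
      refine Finset.mem_inter.mpr ⟨Finset.mem_image.mpr ⟨y, (T.mem_neighborFinset x y).mpr hxy, rfl⟩,
        Finset.mem_image.mpr ⟨x, (T.mem_neighborFinset y x).mpr hxy.symm, Sym2.eq_swap⟩⟩
  have himg : (A ∪ B).image φ ⊆ Finset.range k := by
    intro c hc
    obtain ⟨e, he, rfl⟩ := Finset.mem_image.mp hc
    exact Finset.mem_range.mpr (hφ e (hedge e he))
  have h1 : ((A ∪ B).image φ).card = (A ∪ B).card := Finset.card_image_of_injOn hinj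
  have h2 : ((A ∪ B).image φ).card ≤ k := by
    have := Finset.card_le_card himg
    simpa using this
  have h3 : (A ∩ B).card = 1 := by rw [hABint]; rfl
  omega

end Coloring

theorem stmt_19 {V : Type*} [Fintype V] (T : SimpleGraph V) (hT : T.IsTree)
    (hΔ : 1 ≤ T.maxDegree) :
    strongChromaticIndex T = oreDegree T - 1 := by
  classical
  have hconn := hT.isConnected
  have hnV : Nonempty V := hconn.nonempty
  obtain ⟨x0, hx0⟩ := T.exists_maximal_degree_vertex
  have hdx0 : 0 < T.degree x0 := by omega
  obtain ⟨y0, hxy0⟩ := (T.degree_pos_iff_exists_adj x0).mp hdx0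
  have hBdd : BddAbove {n | ∃ x y, T.Adj x y ∧ n = T.degree x + T.degree y} := by
    refine ⟨2 * Fintype.card V, ?_⟩
    rintro n ⟨x, y, -, rfl⟩
    have h1 : T.degree x ≤ Fintype.card V := by
      calc T.degree x = (T.neighborFinset x).card := rfl
        _ ≤ Finset.univ.card := Finset.card_le_univ _
        _ = Fintype.card V := Finset.card_univ
    have h2 : T.degree y ≤ Fintype.card V := by
      calc T.degree y = (T.neighborFinset y).card := rfl
        _ ≤ Finset.univ.card := Finset.card_le_univ _
        _ = Fintype.card V := Finset.card_univ
    show T.degree x + T.degree y ≤ 2 * Fintype.card V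
    omega
  have hθle : ∀ {x y : V}, T.Adj x y → T.degree x + T.degree y ≤ oreDegree T := by
    intro x y h
    exact le_csSup hBdd ⟨x, y, h, rfl⟩
  have hdegpos : ∀ {x y : V}, T.Adj x y → 0 < T.degree x := by
    intro x y h
    rw [T.degree_pos_iff_exists_adj]
    exact ⟨y, h⟩
  have hθ2 : 2 ≤ oreDegree T := by
    have h1 := hdegpos hxy0
    have h2 := hdegpos hxy0.symm
    have h3 := hθle hxy0
    omega
  obtain ⟨r⟩ := hnV
  have hmem : (oreDegree T - 1) ∈
      {k | ∃ φ : Sym2 V → ℕ, (∀ e ∈ T.edgeSet, φ e < k) ∧ IsStrongEdgeColoring T φ} :=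
    ⟨stφ T r, stφ_bound hT r hθle hθ2, stφ_strong hT r⟩
  have hlow : ∀ k ∈
      {k | ∃ φ : Sym2 V → ℕ, (∀ e ∈ T.edgeSet, φ e < k) ∧ IsStrongEdgeColoring T φ},
      oreDegree T - 1 ≤ k := by
    rintro k ⟨φ', hφ', hst'⟩
    have hSmem : oreDegree T ∈ {n | ∃ x y, T.Adj x y ∧ n = T.degree x + T.degree y} :=
      Nat.sSup_mem ⟨T.degree x0 + T.degree y0, x0, y0, hxy0, rfl⟩ hBdd
    obtain ⟨x, y, hxy, hxyθ⟩ := hSmem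
    have := stLower hxy k φ' hφ' hst'
    omega
  exact le_antisymm (Nat.sInf_le hmem) (hlow _ (Nat.sInf_mem ⟨_, hmem⟩))
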